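/- Let p be a prime with p ≡ 3 (mod 8). The bordered quadratic double circulant code B_p(1, u+uω, 1, u+uω, 1+u+uω, 1+u+uω) over F₄+uF₄ is a self-dual code of length 2p+2 over F₄+uF₄. -/

import Mathlib

noncomputable section

open Matrix
open scoped Classical

/-- The quadratic residue circulant matrix `Q_p(a,b,c)`: the `p × p` circulant matrix
(indexed by `ZMod p`) whose `(i,j)` entry is `a` if `j - i = 0`, `b` if `j - i` is a
nonzero quadratic residue modulo `p`, and `c` if `j - i` is a quadratic non-residue. -/
def Qcirc {R : Type*} [CommRing R] (p : ℕ) (a b c : R) :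
    Matrix (ZMod p) (ZMod p) R :=
  Matrix.of fun i j =>
    if j - i = 0 then a else if IsSquare (j - i) then b else c

/-- The bordered matrix `M` of size `(p+1) × (p+1)` (rows and columns indexed by
`Option (ZMod p)`, with `none` the border index): `M[none,none] = lam`,
`M[none, some j] = beta`, `M[some i, none] = gam`, and the lower-right `p × p`
block is `Q_p(a,b,c)`. -/
def borderedQ {R : Type*} [CommRing R] (p : ℕ) (a b c lam beta gam : R) :
    Option (ZMod p) → Option (ZMod p) → R := fun i j =>
  match i, j with
  | none, none => lam
  | none, some _ => beta
  | some _, none => gam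
  | some i', some j' => Qcirc p a b c i' j'

/-- The rows of the generator matrix `[ I_{p+1} | M ]` of the bordered quadratic
double circulant code, as vectors of length `2p + 2`. -/
def borderedQDCGen {R : Type*} [CommRing R] (p : ℕ) (a b c lam beta gam : R) :
    Option (ZMod p) → (Option (ZMod p) ⊕ Option (ZMod p)) → R := fun i =>
  Sum.elim (fun j => if i = j then 1 else 0) (fun j => borderedQ p a b c lam beta gam i j)

/-- The bordered quadratic double circulant code `B_p(a,b,c,λ,β,γ)`: the row span of
`[ I_{p+1} | M ]`, a linear code of length `2p + 2` over `R`. -/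
def borderedQDC {R : Type*} [CommRing R] (p : ℕ) (a b c lam beta gam : R) :
    Submodule R ((Option (ZMod p) ⊕ Option (ZMod p)) → R) :=
  Submodule.span R (Set.range (borderedQDCGen p a b c lam beta gam))

/-- The dual of a code `C ⊆ Rⁿ` with respect to the Euclidean inner product. -/
def dualSet {R ι : Type*} [CommRing R] [Fintype ι] (C : Set (ι → R)) : Set (ι → R) :=
  {x | ∀ y ∈ C, ∑ i, x i * y i = 0}


open Finset in
open Finset in
lemma even_card_invol_aux {α : Type*} [DecidableEq α] (σ : α → α) :
    ∀ n, ∀ s : Finset α, s.card = n → (∀ a ∈ s, σ a ∈ s) → (∀ a ∈ s, σ (σ a) = a) →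
      (∀ a ∈ s, σ a ≠ a) → Even s.card := by
  intro n
  induction n using Nat.strong_induction_on with
  | _ n ih =>
    intro s hcard hmem hinv hne
    rcases s.eq_empty_or_nonempty with rfl | ⟨a, ha⟩
    · simp
    · have hsa : σ a ∈ s := hmem a ha
      have hsane : σ a ≠ a := hne a ha
      set t := (s.erase a).erase (σ a) with ht
      have hσa_mem : σ a ∈ s.erase a := Finset.mem_erase.mpr ⟨hsane, hsa⟩
      have htcard : t.card + 2 = s.card := by
        rw [ht, Finset.card_erase_of_mem hσa_mem, Finset.card_erase_of_mem ha]
        have h1 : 1 ≤ s.card := Finset.card_pos.mpr ⟨a, ha⟩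
        have h2 : 2 ≤ s.card := by
          rw [Nat.succ_le_iff]
          exact Finset.one_lt_card.mpr ⟨a, ha, σ a, hsa, fun h => hsane h.symm⟩
        omega
      have htsub : ∀ b ∈ t, b ∈ s ∧ b ≠ a ∧ b ≠ σ a := by
        intro b hb
        simp only [ht, Finset.mem_erase] at hb
        exact ⟨hb.2.2, hb.2.1, hb.1⟩
      have hmem' : ∀ b ∈ t, σ b ∈ t := by
        intro b hb
        obtain ⟨hbs, hba, hbsa⟩ := htsub b hb
        refine Finset.mem_erase.mpr ⟨?_, Finset.mem_erase.mpr ⟨?_, hmem b hbs⟩⟩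
        · intro h; exact hba (by rw [← hinv b hbs, h, hinv a ha])
        · intro h; exact hbsa (by rw [← hinv b hbs, h])
      have heven : Even t.card := by
        refine ih t.card (by omega) t rfl hmem' ?_ ?_
        · intro b hb; exact hinv b (htsub b hb).1
        · intro b hb; exact hne b (htsub b hb).1
      rw [← htcard]
      obtain ⟨m, hm⟩ := heven
      exact ⟨m + 1, by omega⟩

lemma even_card_invol {α : Type*} [DecidableEq α] (s : Finset α) (σ : α → α)
    (hmem : ∀ a ∈ s, σ a ∈ s) (hinv : ∀ a ∈ s, σ (σ a) = a) (hne : ∀ a ∈ s, σ a ≠ a) :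
    Even s.card :=
  even_card_invol_aux σ s.card s rfl hmem hinv hne

section auxZMod
open Finset
variable {p : ℕ} [Fact p.Prime]

lemma isSquare_inv_iff' (a : ZMod p) : IsSquare a⁻¹ ↔ IsSquare a := by
  constructor
  · rintro ⟨c, hc⟩
    rcases eq_or_ne a 0 with rfl | ha
    · exact ⟨0, by simp⟩
    · refine ⟨c⁻¹, ?_⟩
      rw [← inv_inv a, hc, mul_inv]
  · rintro ⟨c, hc⟩
    exact ⟨c⁻¹, by rw [hc, mul_inv]⟩

lemma nonsq_mul_nonsq {a b : ZMod p} (ha : a ≠ 0) (hb : b ≠ 0)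
    (ha' : ¬IsSquare a) (hb' : ¬IsSquare b) : IsSquare (a * b) := by
  have h1 : quadraticChar (ZMod p) a = -1 := quadraticChar_neg_one_iff_not_isSquare.mpr ha'
  have h2 : quadraticChar (ZMod p) b = -1 := quadraticChar_neg_one_iff_not_isSquare.mpr hb'
  have : quadraticChar (ZMod p) (a * b) = 1 := by rw [_root_.map_mul, h1, h2]; ring
  exact (quadraticChar_one_iff_isSquare (mul_ne_zero ha hb)).mp this

lemma sq_mul_nonsq {a b : ZMod p} (ha : a ≠ 0) (ha' : IsSquare a)
    (hb' : ¬IsSquare b) : ¬IsSquare (a * b) := by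
  intro h
  apply hb'
  have : b = a⁻¹ * (a * b) := by field_simp
  rw [this]
  exact ((isSquare_inv_iff' a).mpr ha').mul h

lemma card_nonzero_squares_odd (h3 : p % 8 = 3) :
    Odd (univ.filter fun x : ZMod p => x ≠ 0 ∧ IsSquare x).card := by
  have hm1 : ¬IsSquare (-1 : ZMod p) := by
    rw [ZMod.exists_sq_eq_neg_one_iff]
    omega
  -- bijection x ↦ -x between nonzero squares and nonzero nonsquares
  set s := univ.filter fun x : ZMod p => x ≠ 0 ∧ IsSquare x with hs
  set t := univ.filter fun x : ZMod p => x ≠ 0 ∧ ¬IsSquare x with hts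
  have hneg_mem : ∀ x : ZMod p, x ≠ 0 → IsSquare x → ¬IsSquare (-x) := by
    intro x hx hsx hnx
    apply hm1
    have : (-1 : ZMod p) = (-x) * x⁻¹ := by field_simp
    rw [this]
    exact hnx.mul ((isSquare_inv_iff' x).mpr hsx)
  have hneg_mem' : ∀ x : ZMod p, x ≠ 0 → ¬IsSquare x → IsSquare (-x) := by
    intro x hx hsx
    have : (-x) = (-1) * x := by ring
    rw [this]
    exact nonsq_mul_nonsq (by simp) hx hm1 hsx
  have hcard : s.card = t.card := by
    apply Finset.card_nbij' (i := fun x => -x) (j := fun x => -x)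
    · intro x hx
      simp only [Finset.mem_coe, hs, hts, mem_filter, mem_univ, true_and] at hx ⊢
      exact ⟨neg_ne_zero.mpr hx.1, hneg_mem x hx.1 hx.2⟩
    · intro x hx
      simp only [Finset.mem_coe, hs, hts, mem_filter, mem_univ, true_and] at hx ⊢
      refine ⟨neg_ne_zero.mpr hx.1, ?_⟩
      have := hneg_mem' x hx.1 hx.2
      exact this
    · intro x _; simp
    · intro x _; simp
  have hsplit : s.card + t.card = p - 1 := by
    have h1 : (univ.filter fun x : ZMod p => x ≠ 0).card = p - 1 := by
      rw [Finset.filter_ne', Finset.card_erase_of_mem (mem_univ 0), Finset.card_univ, ZMod.card]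
    have h2 := Finset.card_filter_add_card_filter_not
      (s := univ.filter fun x : ZMod p => x ≠ 0) (p := fun x => IsSquare x)
    rw [Finset.filter_filter, Finset.filter_filter] at h2
    rw [hs, hts]
    rw [← h1, ← h2]
  have hp2 : 2 ≤ p := (Fact.out : p.Prime).two_le
  rw [Nat.odd_iff]
  omega

lemma even_pairs (h3 : p % 8 = 3) (d : ZMod p) (hd : d ≠ 0) :
    Even (univ.filter fun t : ZMod p =>
      (t ≠ 0 ∧ IsSquare t) ∧ (t - d ≠ 0 ∧ IsSquare (t - d))).card := by
  have hm1 : ¬IsSquare (-1 : ZMod p) := by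
    rw [ZMod.exists_sq_eq_neg_one_iff]
    omega
  have hp2' : p ≠ 2 := by
    intro h; rw [h] at h3; omega
  have h2sq : ¬IsSquare (2 : ZMod p) := by
    rw [ZMod.exists_sq_eq_two_iff hp2']
    omega
  have h2ne : (2 : ZMod p) ≠ 0 := by
    intro h
    have h' : ((2 : ℕ) : ZMod p) = 0 := by exact_mod_cast h
    rw [ZMod.natCast_eq_zero_iff] at h'
    exact hp2' ((Nat.prime_dvd_prime_iff_eq (Fact.out : p.Prime) Nat.prime_two).mp h')
  set A := univ.filter fun t : ZMod p =>
      (t ≠ 0 ∧ IsSquare t) ∧ (t - d ≠ 0 ∧ IsSquare (t - d)) with hA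
  have hmemA : ∀ t : ZMod p, t ∈ A ↔
      (t ≠ 0 ∧ IsSquare t) ∧ (t - d ≠ 0 ∧ IsSquare (t - d)) := by
    intro t; simp [hA]
  by_cases hds : IsSquare d
  · -- σ t = d * t * (t - d)⁻¹
    apply even_card_invol A (fun t => d * t * (t - d)⁻¹)
    · intro t ht
      rw [hmemA] at ht ⊢
      obtain ⟨⟨ht0, hts⟩, ⟨htd0, htds⟩⟩ := ht
      have h1 : d * t * (t - d)⁻¹ ≠ 0 :=
        mul_ne_zero (mul_ne_zero hd ht0) (inv_ne_zero htd0)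
      have hkey : d * t * (t - d)⁻¹ - d = d * d * (t - d)⁻¹ := by
        field_simp
        ring
      refine ⟨⟨h1, (hds.mul hts).mul ((isSquare_inv_iff' _).mpr htds)⟩, ?_, ?_⟩
      · rw [hkey]
        exact mul_ne_zero (mul_ne_zero hd hd) (inv_ne_zero htd0)
      · rw [hkey]
        exact (hds.mul hds).mul ((isSquare_inv_iff' _).mpr htds)
    · intro t ht
      rw [hmemA] at ht
      obtain ⟨⟨ht0, hts⟩, ⟨htd0, htds⟩⟩ := ht
      have hkey : d * t * (t - d)⁻¹ - d = d * d * (t - d)⁻¹ := by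
        field_simp
        ring
      rw [hkey]
      have hdd : d * d * (t - d)⁻¹ ≠ 0 :=
        mul_ne_zero (mul_ne_zero hd hd) (inv_ne_zero htd0)
      field_simp
    · intro t ht
      rw [hmemA] at ht
      obtain ⟨⟨ht0, hts⟩, ⟨htd0, htds⟩⟩ := ht
      intro hfix
      -- d * t = t * (t - d), so t = 2 * d
      have ht2 : t = 2 * d := by
        have h1 : d * t = t * (t - d) := by
          field_simp at hfix
          linear_combination t * hfix
        have h2 : t * (t - d - d) = 0 := by ring_nf; linear_combination -h1
        rcases mul_eq_zero.mp h2 with h | h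
        · exact absurd h ht0
        · linear_combination h
      apply h2sq
      have : (2 : ZMod p) = t * d⁻¹ := by rw [ht2]; field_simp
      rw [this]
      exact hts.mul ((isSquare_inv_iff' d).mpr hds)
  · -- τ t = d * d * t⁻¹
    apply even_card_invol A (fun t => d * d * t⁻¹)
    · intro t ht
      rw [hmemA] at ht ⊢
      obtain ⟨⟨ht0, hts⟩, ⟨htd0, htds⟩⟩ := ht
      have h1 : d * d * t⁻¹ ≠ 0 := mul_ne_zero (mul_ne_zero hd hd) (inv_ne_zero ht0)
      have hdt0 : d - t ≠ 0 := fun h => htd0 (by linear_combination -h)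
      have hkey : d * d * t⁻¹ - d = d * (d - t) * t⁻¹ := by
        field_simp
      have hndt : ¬IsSquare (d - t) := by
        have : d - t = (-1) * (t - d) := by ring
        rw [this]
        intro hsq
        apply hm1
        have h4 : (-1 : ZMod p) = ((-1) * (t - d)) * (t - d)⁻¹ := by field_simp
        rw [h4]
        exact hsq.mul ((isSquare_inv_iff' _).mpr htds)
      refine ⟨⟨h1, (IsSquare.mul ⟨d, rfl⟩ ((isSquare_inv_iff' _).mpr hts))⟩, ?_, ?_⟩
      · rw [hkey]
        exact mul_ne_zero (mul_ne_zero hd hdt0) (inv_ne_zero ht0)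
      · rw [hkey]
        exact (nonsq_mul_nonsq hd hdt0 hds hndt).mul ((isSquare_inv_iff' _).mpr hts)
    · intro t ht
      rw [hmemA] at ht
      obtain ⟨⟨ht0, hts⟩, _⟩ := ht
      field_simp
    · intro t ht
      rw [hmemA] at ht
      obtain ⟨⟨ht0, hts⟩, ⟨htd0, htds⟩⟩ := ht
      intro hfix
      -- t * t = d * d, so t = d or t = -d
      have h1 : (t - d) * (t + d) = 0 := by
        have : d * d = t * t := by
          field_simp at hfix
          linear_combination hfix
        linear_combination -this
      rcases mul_eq_zero.mp h1 with h | h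
      · exact htd0 h
      · -- t = -d, then t - d = -(2*d), not a square
        have ht2 : t - d = (-2) * d := by linear_combination h
        apply absurd htds
        rw [ht2]
        have hm2 : IsSquare (-2 : ZMod p) := by
          have : (-2 : ZMod p) = (-1) * 2 := by ring
          rw [this]
          exact nonsq_mul_nonsq (neg_ne_zero.mpr one_ne_zero) h2ne hm1 h2sq
        exact sq_mul_nonsq (a := (-2 : ZMod p)) (b := d) (neg_ne_zero.mpr h2ne) hm2 hds
noncomputable def gInd (R : Type*) [CommRing R] {p : ℕ} (t : ZMod p) : R :=
  if t ≠ 0 ∧ IsSquare t then 1 else 0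

lemma borderedM_gram {R : Type*} [CommRing R] {p : ℕ} [NeZero p] [Fact p.Prime]
    (h3 : p % 8 = 3) (v : R) (hv : v * v = 0) (h2 : (2 : R) = 0) :
    (Matrix.of (borderedQ p 1 v 1 v (1 + v) (1 + v))) *
      (Matrix.of (borderedQ p 1 v 1 v (1 + v) (1 + v)))ᵀ = -1 := by
  have hw : (1 + v) * (1 + v) = 1 := by linear_combination v * h2 + hv
  have hneg1 : (-1 : R) = 1 := by linear_combination -h2
  have hoddcast : ∀ n : ℕ, Odd n → (n : R) = 1 := by
    rintro n ⟨m, rfl⟩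
    push_cast
    linear_combination (m : R) * h2
  have hevencast : ∀ n : ℕ, Even n → (n : R) = 0 := by
    rintro n ⟨m, rfl⟩
    push_cast
    linear_combination (m : R) * h2
  have hpodd : Odd p := by
    rw [Nat.odd_iff]; omega
  have hpcast : ((p : ℕ) : R) = 1 := hoddcast p hpodd
  have hconst : ∀ x : R, (∑ _j : ZMod p, x) = x := by
    intro x
    rw [Finset.sum_const, Finset.card_univ, ZMod.card, nsmul_eq_mul, hpcast, one_mul]
  have hind : ∀ (f : ZMod p → R) (P : ZMod p → Prop), (∀ x, P x → f x = 1) →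
      (∀ x, ¬P x → f x = 0) → ∑ x : ZMod p, f x = ((univ.filter P).card : R) := by
    intro f P h1 h0
    calc ∑ x : ZMod p, f x = ∑ x : ZMod p, if P x then (1:R) else 0 := by
          refine Finset.sum_congr rfl fun x _ => ?_
          by_cases h : P x
          · rw [if_pos h]; exact h1 x h
          · rw [if_neg h]; exact h0 x h
      _ = ((univ.filter P).card : R) := by
          rw [Finset.sum_ite, Finset.sum_const_zero, add_zero, Finset.sum_const, nsmul_one]
  have hQg : ∀ i j : ZMod p, Qcirc p 1 v 1 i j = 1 + (1 + v) * gInd R (j - i) := by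
    intro i j
    unfold Qcirc
    rw [Matrix.of_apply]
    unfold gInd
    rcases eq_or_ne (j - i) 0 with h | h
    · rw [if_pos h, if_neg (by simp [h])]
      ring
    · rw [if_neg h]
      by_cases hs : IsSquare (j - i)
      · rw [if_pos hs, if_pos ⟨h, hs⟩]
        linear_combination -h2
      · rw [if_neg hs, if_neg (by tauto)]
        ring
  have hsum_g : ∀ c : ZMod p, (∑ j : ZMod p, gInd R (j - c)) = 1 := by
    intro c
    have he : ∑ j : ZMod p, gInd R (j - c) = ∑ t : ZMod p, gInd R t :=
      Fintype.sum_equiv (Equiv.subRight c) _ _ (fun j => rfl)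
    rw [he]
    rw [hind (fun t => gInd R t) (fun x => x ≠ 0 ∧ IsSquare x)
      (fun x hx => by simp [gInd, hx]) (fun x hx => by simp [gInd, hx])]
    rw [Finset.filter_congr_decidable]
    exact hoddcast _ (card_nonzero_squares_odd h3)
  have hgsq : ∀ t : ZMod p, gInd R t * gInd R t = gInd R t := by
    intro t
    by_cases h : (t ≠ 0 ∧ IsSquare t) <;> simp [gInd, h]
  have hgg : ∀ d : ZMod p, d ≠ 0 → (∑ t : ZMod p, gInd R (t - d) * gInd R t) = 0 := by
    intro d hd
    have hterm : ∀ t : ZMod p, gInd R (t - d) * gInd R t =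
        if (t ≠ 0 ∧ IsSquare t) ∧ (t - d ≠ 0 ∧ IsSquare (t - d)) then (1:R) else 0 := by
      intro t
      by_cases hA : (t - d ≠ 0 ∧ IsSquare (t - d)) <;>
        by_cases hB : (t ≠ 0 ∧ IsSquare t) <;>
        simp [gInd, hA, hB]
    rw [hind (fun t => gInd R (t - d) * gInd R t)
      (fun t => (t ≠ 0 ∧ IsSquare t) ∧ (t - d ≠ 0 ∧ IsSquare (t - d)))
      (fun t htt => by show gInd R (t - d) * gInd R t = 1; rw [hterm t, if_pos htt])
      (fun t htt => by show gInd R (t - d) * gInd R t = 0; rw [hterm t, if_neg htt])]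
    rw [Finset.filter_congr_decidable]
    exact hevencast _ (even_pairs h3 d hd)
  ext i k
  rw [Matrix.mul_apply]
  simp only [Matrix.transpose_apply, Matrix.of_apply]
  rw [Fintype.sum_option]
  have hRHS : (-1 : Matrix (Option (ZMod p)) (Option (ZMod p)) R) i k
      = if i = k then (1 : R) else 0 := by
    rw [Matrix.neg_apply, Matrix.one_apply]
    split_ifs <;> simp [hneg1]
  rw [hRHS]
  match i, k with
  | none, none =>
    dsimp only [borderedQ]
    rw [Finset.sum_congr rfl fun j _ => hw, hconst]
    rw [if_pos rfl]
    linear_combination hv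
  | none, some k =>
    dsimp only [borderedQ]
    rw [if_neg (by simp)]
    have hterm : ∀ j : ZMod p, (1 + v) * Qcirc p 1 v 1 k j
        = ((1 + v) + gInd R (j - k)) := by
      intro j
      rw [hQg k j]
      linear_combination gInd R (j - k) * hw
    rw [Finset.sum_congr rfl fun j _ => hterm j, Finset.sum_add_distrib, hconst, hsum_g]
    linear_combination (1 + v) * h2 + hv
  | some i, none =>
    dsimp only [borderedQ]
    rw [if_neg (by simp)]
    have hterm : ∀ j : ZMod p, Qcirc p 1 v 1 i j * (1 + v)
        = ((1 + v) + gInd R (j - i)) := by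
      intro j
      rw [hQg i j]
      linear_combination gInd R (j - i) * hw
    rw [Finset.sum_congr rfl fun j _ => hterm j, Finset.sum_add_distrib, hconst, hsum_g]
    linear_combination (1 + v) * h2 + hv
  | some i, some k =>
    dsimp only [borderedQ]
    by_cases hik : i = k
    · subst hik
      rw [if_pos rfl]
      have hterm : ∀ j : ZMod p, Qcirc p 1 v 1 i j * Qcirc p 1 v 1 i j
          = 1 + gInd R (j - i) := by
        intro j
        rw [hQg i j]
        linear_combination (gInd R (j - i) * gInd R (j - i)) * hw + hgsq (j - i)
          + ((1 + v) * gInd R (j - i)) * h2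
      rw [Finset.sum_congr rfl fun j _ => hterm j, Finset.sum_add_distrib, hconst, hsum_g]
      linear_combination hw + h2
    · rw [if_neg (by simpa using hik)]
      have hterm : ∀ j : ZMod p, Qcirc p 1 v 1 i j * Qcirc p 1 v 1 k j
          = 1 + ((1 + v) * gInd R (j - i) + ((1 + v) * gInd R (j - k)
            + gInd R (j - i) * gInd R (j - k))) := by
        intro j
        rw [hQg i j, hQg k j]
        linear_combination (gInd R (j - i) * gInd R (j - k)) * hw
      rw [Finset.sum_congr rfl fun j _ => hterm j]
      rw [Finset.sum_add_distrib, Finset.sum_add_distrib, Finset.sum_add_distrib, hconst]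
      rw [← Finset.mul_sum, ← Finset.mul_sum, hsum_g, hsum_g]
      have hre : (∑ j : ZMod p, gInd R (j - i) * gInd R (j - k))
          = ∑ t : ZMod p, gInd R (t - (i - k)) * gInd R t := by
        apply Fintype.sum_equiv (Equiv.subRight k)
        intro j
        have harg : j - i = (j - k) - (i - k) := by ring
        rw [harg]
        rfl
      rw [hre, hgg (i - k) (sub_ne_zero.mpr hik)]
      linear_combination hw + (2 + v) * h2
end auxZMod

section general
variable {R : Type*} [CommRing R] {ι : Type*} [Fintype ι] [DecidableEq ι]

lemma span_eq_dual_of_gram (M : Matrix ι ι R) (h : M * Mᵀ = -1)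
    (G : ι → (ι ⊕ ι) → R)
    (hG : ∀ i, G i = Sum.elim (fun j => if i = j then 1 else 0) (fun j => M i j)) :
    ((Submodule.span R (Set.range G) : Submodule R ((ι ⊕ ι) → R)) : Set ((ι ⊕ ι) → R)) =
      dualSet ((Submodule.span R (Set.range G) : Submodule R ((ι ⊕ ι) → R)) :
        Set ((ι ⊕ ι) → R)) := by
  have hMtM : Mᵀ * M = -1 := by
    have h1 : M * (-Mᵀ) = 1 := by rw [Matrix.mul_neg, h, neg_neg]
    have h2 : (-Mᵀ) * M = 1 := mul_eq_one_comm.mp h1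
    rw [Matrix.neg_mul] at h2
    exact neg_eq_iff_eq_neg.mp h2
  -- generator orthogonality
  have horth : ∀ i k, ∑ s : ι ⊕ ι, G i s * G k s = 0 := by
    intro i k
    rw [Fintype.sum_sum_type]
    simp only [hG, Sum.elim_inl, Sum.elim_inr]
    have h1 : (∑ j : ι, (if i = j then (1:R) else 0) * if k = j then 1 else 0)
        = if i = k then 1 else 0 := by
      simp [ite_mul, Finset.sum_ite_eq]
    have h2 : ∑ j : ι, M i j * M k j = (M * Mᵀ) i k := by
      simp [Matrix.mul_apply, Matrix.transpose_apply]
    rw [h1, h2, h]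
    simp [Matrix.neg_apply, Matrix.one_apply]
  -- forward inclusion
  apply Set.eq_of_subset_of_subset
  · intro x hx
    intro y hy
    -- first: generators are orthogonal to all of span
    have hgen : ∀ i, ∀ z ∈ Submodule.span R (Set.range G), ∑ s : ι ⊕ ι, G i s * z s = 0 := by
      intro i z hz
      induction hz using Submodule.span_induction with
      | mem w hw =>
        obtain ⟨k, rfl⟩ := hw
        exact horth i k
      | zero => simp
      | add w₁ w₂ _ _ ih1 ih2 =>
        simp only [Pi.add_apply, mul_add, Finset.sum_add_distrib, ih1, ih2, add_zero]
      | smul r w _ ih =>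
        simp only [Pi.smul_apply, smul_eq_mul, mul_left_comm, ← Finset.mul_sum, ih, mul_zero]
    -- then: any element of span is orthogonal to all of span
    induction hx using Submodule.span_induction with
    | mem w hw =>
      obtain ⟨i, rfl⟩ := hw
      exact hgen i y hy
    | zero => simp
    | add w₁ w₂ _ _ ih1 ih2 =>
      simp only [Pi.add_apply, add_mul, Finset.sum_add_distrib, ih1, ih2, add_zero]
    | smul r w _ ih =>
      simp only [Pi.smul_apply, smul_eq_mul, mul_assoc, ← Finset.mul_sum, ih, mul_zero]
  · -- reverse inclusion
    intro x hx
    have hrow : ∀ i, x (Sum.inl i) + ∑ j : ι, x (Sum.inr j) * M i j = 0 := by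
      intro i
      have := hx (G i) (Submodule.subset_span ⟨i, rfl⟩)
      rw [Fintype.sum_sum_type] at this
      simp only [hG, Sum.elim_inl, Sum.elim_inr, mul_ite, mul_one, mul_zero] at this
      rwa [Finset.sum_ite_eq Finset.univ i (fun j => x (Sum.inl j)),
        if_pos (Finset.mem_univ i)] at this
    have hxeq : x = ∑ i : ι, x (Sum.inl i) • G i := by
      funext s
      rw [Finset.sum_apply]
      cases s with
      | inl k =>
        simp only [Pi.smul_apply, hG, Sum.elim_inl, smul_eq_mul, mul_ite, mul_one, mul_zero]
        rw [Finset.sum_ite_eq' Finset.univ k (fun i => x (Sum.inl i)), if_pos (Finset.mem_univ k)]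
      | inr j =>
        simp only [Pi.smul_apply, hG, Sum.elim_inr, smul_eq_mul]
        have hsubst : ∀ i, x (Sum.inl i) = -∑ j' : ι, x (Sum.inr j') * M i j' :=
          fun i => eq_neg_of_add_eq_zero_left (hrow i)
        symm
        calc ∑ i : ι, x (Sum.inl i) * M i j
            = ∑ i : ι, (-∑ j' : ι, x (Sum.inr j') * M i j') * M i j := by
              refine Finset.sum_congr rfl fun i _ => ?_; rw [hsubst i]
          _ = -∑ j' : ι, x (Sum.inr j') * ∑ i : ι, M i j' * M i j := by
              simp only [neg_mul, Finset.sum_mul, Finset.mul_sum, Finset.sum_neg_distrib,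
                mul_assoc]
              rw [Finset.sum_comm]
          _ = -∑ j' : ι, x (Sum.inr j') * (Mᵀ * M) j' j := by
              refine congrArg _ (Finset.sum_congr rfl fun j' _ => ?_)
              rw [Matrix.mul_apply]; simp [Matrix.transpose_apply]
          _ = x (Sum.inr j) := by
              rw [hMtM]
              simp [Matrix.neg_apply, Matrix.one_apply, mul_ite, Finset.sum_ite_eq']
    rw [hxeq]
    exact Submodule.sum_mem _ fun i _ => Submodule.smul_mem _ _ (Submodule.subset_span ⟨i, rfl⟩)

end general

/-- The field `F₄` with four elements. -/
abbrev F4 := GaloisField 2 2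

/-- The ring `F₄ + u F₄ = F₄[u]/(u²)`. -/
abbrev R4 := DualNumber F4

/-- For a prime `p ≡ 3 (mod 8)` and `ω` a root of `x² + x + 1` in `F₄ + u F₄`,
the bordered quadratic double circulant code
`B_p(1, u + uω, 1, u + uω, 1 + u + uω, 1 + u + uω)` over `F₄ + u F₄`
is self-dual of length `2p + 2`. -/
theorem borderedQDC_self_dual_of_mod_eight_eq_three_typeI
    (p : ℕ) [NeZero p] (hp : Nat.Prime p) (h3 : p % 8 = 3)
    (ω : R4) (hω : ω ^ 2 + ω + 1 = 0) :
    letI u : R4 := DualNumber.eps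
    (borderedQDC p 1 (u + u * ω) 1 (u + u * ω) (1 + u + u * ω) (1 + u + u * ω) :
        Set ((Option (ZMod p) ⊕ Option (ZMod p)) → R4)) =
      dualSet (borderedQDC p 1 (u + u * ω) 1 (u + u * ω) (1 + u + u * ω) (1 + u + u * ω) :
        Set ((Option (ZMod p) ⊕ Option (ZMod p)) → R4)) := by
  haveI : Fact p.Prime := ⟨hp⟩
  set u : R4 := DualNumber.eps with hu
  have h2 : (2 : R4) = 0 := by
    have hF : ((2 : ℕ) : F4) = 0 := CharP.cast_eq_zero F4 2
    calc (2 : R4) = ((2 : ℕ) : R4) := by norm_cast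
      _ = TrivSqZeroExt.inl ((2 : ℕ) : F4) := (TrivSqZeroExt.inl_natCast 2).symm
      _ = TrivSqZeroExt.inl (0 : F4) := by rw [hF]
      _ = 0 := TrivSqZeroExt.inl_zero F4
  have hv : (u + u * ω) * (u + u * ω) = 0 := by
    have hexp : (u + u * ω) * (u + u * ω) = (u * u) * ((1 + ω) * (1 + ω)) := by ring
    rw [hexp]
    rw [hu, DualNumber.eps_mul_eps, zero_mul]
  have hassoc : (1 : R4) + u + u * ω = 1 + (u + u * ω) := add_assoc _ _ _
  rw [hassoc]
  exact span_eq_dual_of_gram (Matrix.of (borderedQ p 1 (u + u * ω) 1 (u + u * ω)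
      (1 + (u + u * ω)) (1 + (u + u * ω))))
    (borderedM_gram h3 (u + u * ω) hv h2)
    (borderedQDCGen p 1 (u + u * ω) 1 (u + u * ω) (1 + (u + u * ω)) (1 + (u + u * ω)))
    (fun i => rfl)


end
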